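/- Let A be a real m×m matrix with ⟨Ay, y⟩ ≥ λ_A ‖y‖² for all y ∈ ℝ^m (λ_A > 0), let g̃ : ℝ^n × ℝ^m → ℝ^m be Lipschitz continuous with constant L satisfying λ_A > L, let x ∈ ℝ^n, ε > 0, and let ω : ℝ → ℝ^m be continuous. If y_1, y_2 : [s_0, T] → ℝ^m are continuous functions such that for i = 1,2 and all t ∈ [s_0, T], y_i(t) = y_i(s_0) + (1/ε) ∫_{s_0}^t (−A y_i(v) + g̃(x, y_i(v))) dv + ω(t) − ω(s_0), then for all t ∈ [s_0, T], ‖y_1(t) − y_2(t)‖ ≤ e^{−(λ_A − L)(t − s_0)/ε} ‖y_1(s_0) − y_2(s_0)‖. -/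

import Mathlib

open scoped RealInnerProductSpace
open MeasureTheory

theorem fast_eq_contraction {n m : ℕ} (A : Matrix (Fin m) (Fin m) ℝ) (lamA L : ℝ)
    (hlam : 0 < lamA) (hLlam : L < lamA)
    (hA : ∀ y : EuclideanSpace ℝ (Fin m), lamA * ‖y‖ ^ 2 ≤ ⟪Matrix.toEuclideanLin A y, y⟫)
    (g : EuclideanSpace ℝ (Fin n) → EuclideanSpace ℝ (Fin m) → EuclideanSpace ℝ (Fin m))
    (hg : ∀ x₁ x₂ y₁ y₂, ‖g x₁ y₁ - g x₂ y₂‖ ≤ L * (‖x₁ - x₂‖ + ‖y₁ - y₂‖))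
    (x : EuclideanSpace ℝ (Fin n)) (ε : ℝ) (hε : 0 < ε)
    (ω : ℝ → EuclideanSpace ℝ (Fin m)) (hω : Continuous ω)
    (s₀ T : ℝ) (hs₀T : s₀ ≤ T)
    (y₁ y₂ : ℝ → EuclideanSpace ℝ (Fin m))
    (hy₁c : ContinuousOn y₁ (Set.Icc s₀ T)) (hy₂c : ContinuousOn y₂ (Set.Icc s₀ T))
    (hy₁ : ∀ t ∈ Set.Icc s₀ T, y₁ t = y₁ s₀
      + ε⁻¹ • (∫ v in s₀..t, (-(Matrix.toEuclideanLin A (y₁ v)) + g x (y₁ v)))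
      + (ω t - ω s₀))
    (hy₂ : ∀ t ∈ Set.Icc s₀ T, y₂ t = y₂ s₀
      + ε⁻¹ • (∫ v in s₀..t, (-(Matrix.toEuclideanLin A (y₂ v)) + g x (y₂ v)))
      + (ω t - ω s₀)) :
    ∀ t ∈ Set.Icc s₀ T,
      ‖y₁ t - y₂ t‖ ≤ Real.exp (-(lamA - L) * (t - s₀) / ε) * ‖y₁ s₀ - y₂ s₀‖ := by
  intro t ht
  set c : ℝ := (lamA - L) / ε with hc
  have hcpos : 0 < c := div_pos (by linarith) hε
  set z : ℝ → EuclideanSpace ℝ (Fin m) := fun u => y₁ u - y₂ u with hzdef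
  set f₁ : ℝ → EuclideanSpace ℝ (Fin m) :=
    fun v => -(Matrix.toEuclideanLin A (y₁ v)) + g x (y₁ v) with hf₁def
  set f₂ : ℝ → EuclideanSpace ℝ (Fin m) :=
    fun v => -(Matrix.toEuclideanLin A (y₂ v)) + g x (y₂ v) with hf₂def
  set h : ℝ → EuclideanSpace ℝ (Fin m) := fun v => ε⁻¹ • (f₁ v - f₂ v) with hhdef
  -- continuity facts
  have hAcont : Continuous fun y : EuclideanSpace ℝ (Fin m) => Matrix.toEuclideanLin A y :=
    (Matrix.toEuclideanLin A).continuous_of_finiteDimensional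
  have hgcont : Continuous (g x) := by
    refine LipschitzWith.continuous (K := ⟨max L 0, le_max_right _ _⟩)
      (LipschitzWith.of_dist_le_mul fun a b => ?_)
    have h1 := hg x x a b
    simp only [sub_self, norm_zero, zero_add] at h1
    have h2 : L * ‖a - b‖ ≤ max L 0 * ‖a - b‖ :=
      mul_le_mul_of_nonneg_right (le_max_left _ _) (norm_nonneg _)
    rw [dist_eq_norm, dist_eq_norm]
    exact h1.trans h2
  have hf₁c : ContinuousOn f₁ (Set.Icc s₀ T) :=
    ((hAcont.comp_continuousOn hy₁c).neg).add (hgcont.comp_continuousOn hy₁c)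
  have hf₂c : ContinuousOn f₂ (Set.Icc s₀ T) :=
    ((hAcont.comp_continuousOn hy₂c).neg).add (hgcont.comp_continuousOn hy₂c)
  have hhc : ContinuousOn h (Set.Icc s₀ T) := ((hf₁c.sub hf₂c).const_smul ε⁻¹)
  have hzc : ContinuousOn z (Set.Icc s₀ T) := hy₁c.sub hy₂c
  have hint₁ : ∀ u ∈ Set.Icc s₀ T, IntervalIntegrable f₁ volume s₀ u := fun u hu =>
    (hf₁c.mono (Set.uIcc_subset_Icc (Set.left_mem_Icc.mpr hs₀T) hu)).intervalIntegrable
  have hint₂ : ∀ u ∈ Set.Icc s₀ T, IntervalIntegrable f₂ volume s₀ u := fun u hu =>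
    (hf₂c.mono (Set.uIcc_subset_Icc (Set.left_mem_Icc.mpr hs₀T) hu)).intervalIntegrable
  have hinth : ∀ u ∈ Set.Icc s₀ T, IntervalIntegrable h volume s₀ u := fun u hu =>
    (hhc.mono (Set.uIcc_subset_Icc (Set.left_mem_Icc.mpr hs₀T) hu)).intervalIntegrable
  -- integral equation for z
  have key : ∀ u ∈ Set.Icc s₀ T, z u = z s₀ + ∫ v in s₀..u, h v := by
    intro u hu
    have : (∫ v in s₀..u, h v) =
        ε⁻¹ • ((∫ v in s₀..u, f₁ v) - ∫ v in s₀..u, f₂ v) := by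
      rw [← intervalIntegral.integral_sub (hint₁ u hu) (hint₂ u hu),
        ← intervalIntegral.integral_smul]
    rw [this, hzdef]
    simp only [hy₁ u hu, hy₂ u hu]
    rw [smul_sub]
    abel
  -- inner product bound
  have hbound : ∀ u, ⟪h u, z u⟫ ≤ -c * ⟪z u, z u⟫ := by
    intro u
    have hmap : f₁ u - f₂ u = -(Matrix.toEuclideanLin A (z u)) + (g x (y₁ u) - g x (y₂ u)) := by
      simp only [hf₁def, hf₂def, hzdef, map_sub]
      abel
    have hAz : lamA * ‖z u‖ ^ 2 ≤ ⟪Matrix.toEuclideanLin A (z u), z u⟫ := hA _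
    have hgz : ⟪g x (y₁ u) - g x (y₂ u), z u⟫ ≤ L * ‖z u‖ ^ 2 := by
      have h1 : ⟪g x (y₁ u) - g x (y₂ u), z u⟫ ≤ ‖g x (y₁ u) - g x (y₂ u)‖ * ‖z u‖ :=
        real_inner_le_norm _ _
      have h2 : ‖g x (y₁ u) - g x (y₂ u)‖ ≤ L * ‖z u‖ := by
        have := hg x x (y₁ u) (y₂ u)
        simpa [hzdef] using this
      calc ⟪g x (y₁ u) - g x (y₂ u), z u⟫ ≤ ‖g x (y₁ u) - g x (y₂ u)‖ * ‖z u‖ := h1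
        _ ≤ (L * ‖z u‖) * ‖z u‖ := mul_le_mul_of_nonneg_right h2 (norm_nonneg _)
        _ = L * ‖z u‖ ^ 2 := by ring
    have hinner : ⟪h u, z u⟫ =
        ε⁻¹ * (-⟪Matrix.toEuclideanLin A (z u), z u⟫ + ⟪g x (y₁ u) - g x (y₂ u), z u⟫) := by
      rw [hhdef]
      simp only [hmap, real_inner_smul_left, inner_add_left, inner_neg_left]
    rw [hinner, real_inner_self_eq_norm_sq]
    have hstep : -⟪Matrix.toEuclideanLin A (z u), z u⟫ + ⟪g x (y₁ u) - g x (y₂ u), z u⟫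
        ≤ -(lamA * ‖z u‖ ^ 2) + L * ‖z u‖ ^ 2 := by linarith
    have := mul_le_mul_of_nonneg_left hstep (le_of_lt (inv_pos.mpr hε))
    calc ε⁻¹ * (-⟪Matrix.toEuclideanLin A (z u), z u⟫ + ⟪g x (y₁ u) - g x (y₂ u), z u⟫)
        ≤ ε⁻¹ * (-(lamA * ‖z u‖ ^ 2) + L * ‖z u‖ ^ 2) := this
      _ = -c * ‖z u‖ ^ 2 := by rw [hc]; field_simp; ring
  -- ψ and its derivative
  set φ : ℝ → ℝ := fun u => ⟪z u, z u⟫ with hφdef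
  set ψ : ℝ → ℝ := fun u => φ u * Real.exp (2 * c * (u - s₀)) with hψdef
  have hψderiv : ∀ u ∈ Set.Ioo s₀ T, HasDerivAt ψ
      ((⟪z u, h u⟫ + ⟪h u, z u⟫) * Real.exp (2 * c * (u - s₀))
        + φ u * (2 * c * Real.exp (2 * c * (u - s₀)))) u := by
    intro u hu
    have hIcc_nhds : Set.Icc s₀ T ∈ nhds u := Icc_mem_nhds hu.1 hu.2
    have hF : HasDerivAt (fun r => (∫ v in s₀..r, h v)) (h u) u := by
      refine intervalIntegral.integral_hasDerivAt_right
        (hinth u (Set.mem_Icc.mpr ⟨le_of_lt hu.1, le_of_lt hu.2⟩))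
        ⟨Set.Icc s₀ T, hIcc_nhds, hhc.aestronglyMeasurable measurableSet_Icc⟩ ?_
      exact (hhc u (Set.mem_Icc.mpr ⟨le_of_lt hu.1, le_of_lt hu.2⟩)).continuousAt hIcc_nhds
    have hzd : HasDerivAt z (h u) u := by
      refine ((hF.const_add (z s₀))).congr_of_eventuallyEq ?_
      filter_upwards [hIcc_nhds] with r hr
      exact key r hr
    have hφd : HasDerivAt φ (⟪z u, h u⟫ + ⟪h u, z u⟫) u := HasDerivAt.inner ℝ hzd hzd
    have hexp : HasDerivAt (fun r => Real.exp (2 * c * (r - s₀)))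
        (2 * c * Real.exp (2 * c * (u - s₀))) u := by
      have h1 : HasDerivAt (fun r => 2 * c * (r - s₀)) (2 * c) u := by
        simpa using ((hasDerivAt_id u).sub_const s₀).const_mul (2 * c)
      have := h1.exp
      simpa [mul_comm] using this
    exact hφd.mul hexp
  have hψcont : ContinuousOn ψ (Set.Icc s₀ T) :=
    (hzc.inner hzc).mul (Real.continuous_exp.comp (by fun_prop)).continuousOn
  have hanti : AntitoneOn ψ (Set.Icc s₀ T) := by
    refine antitoneOn_of_deriv_nonpos (convex_Icc s₀ T) hψcont ?_ ?_
    · rw [interior_Icc]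
      exact fun u hu => ((hψderiv u hu).differentiableAt).differentiableWithinAt
    · rw [interior_Icc]
      intro u hu
      rw [(hψderiv u hu).deriv]
      have h1 : ⟪h u, z u⟫ ≤ -c * ⟪z u, z u⟫ := hbound u
      have h2 : ⟪z u, h u⟫ = ⟪h u, z u⟫ := real_inner_comm _ _
      have hexppos : 0 < Real.exp (2 * c * (u - s₀)) := Real.exp_pos _
      have hφeq : φ u = ⟪z u, z u⟫ := rfl
      nlinarith [Real.exp_pos (2 * c * (u - s₀))]
  have hψle : ψ t ≤ ψ s₀ := hanti (Set.left_mem_Icc.mpr hs₀T) ht ht.1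
  -- unfold and conclude
  have hφnorm : ∀ u, φ u = ‖z u‖ ^ 2 := fun u => real_inner_self_eq_norm_sq _
  have hψs₀ : ψ s₀ = ‖z s₀‖ ^ 2 := by
    simp only [hψdef, hφnorm, sub_self, mul_zero, Real.exp_zero, mul_one]
  have hψt : ψ t = ‖z t‖ ^ 2 * Real.exp (2 * c * (t - s₀)) := by
    simp only [hψdef, hφnorm]
  have hid : Real.exp (-c * (t - s₀)) ^ 2 * Real.exp (2 * c * (t - s₀)) = 1 := by
    rw [sq, ← Real.exp_add, ← Real.exp_add, ← Real.exp_zero]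
    congr 1
    ring
  have hsq : ‖z t‖ ^ 2 ≤ (Real.exp (-c * (t - s₀)) * ‖z s₀‖) ^ 2 := by
    rw [hψs₀, hψt] at hψle
    rw [mul_pow]
    nlinarith [hψle, hid, Real.exp_pos (2 * c * (t - s₀)),
      sq_nonneg (Real.exp (-c * (t - s₀))), sq_nonneg ‖z t‖]
  have hfinal : ‖z t‖ ≤ Real.exp (-c * (t - s₀)) * ‖z s₀‖ := by
    have h1 := Real.sqrt_le_sqrt hsq
    rwa [Real.sqrt_sq (norm_nonneg _), Real.sqrt_sq (by positivity)] at h1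
  have hexp_eq : Real.exp (-(lamA - L) * (t - s₀) / ε) = Real.exp (-c * (t - s₀)) := by
    congr 1
    rw [hc]
    field_simp
  rw [hexp_eq]
  exact hfinal
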